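/- Let a candidate size ℓ (with K < ℓ < J) produce common value u for the first ℓ coordinates and let u_{ℓ+1} = (g'_{ℓ+1})^{-1}(θ_ℓ(u)) with θ_ℓ(u) = (∑_{i=1}^ℓ g'_i(u))/(ℓ−K); let candidate size ℓ+1 produce common value v. Both candidates satisfy the same budget identity (equation ∑ costs = G). Then v lies between u and u_{ℓ+1}: min(u, u_{ℓ+1}) ≤ v ≤ max(u, u_{ℓ+1}). -/

import Mathlib

open Finset

/-- Interleaving lemma: if candidate sizes `ℓ` and `ℓ+1` both satisfy the
budget identity, with common values `u` and `v` respectively, then `v` lies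
between `u` and `u_{ℓ+1} = z1 (ℓ+1)` (the value of the `(ℓ+1)`-st coordinate
of the size-`ℓ` candidate). -/
theorem stmt13 (J K l : ℕ) (g : ℕ → ℝ → ℝ) (G : ℝ)
    (hconv : ∀ j, StrictConvexOn ℝ (Set.Ici 0) (g j))
    (hdiff : ∀ j, Differentiable ℝ (g j))
    (hmono : ∀ j, StrictMonoOn (g j) (Set.Ici (0 : ℝ)))
    (horder : ∀ i j, i ≤ j → ∀ x : ℝ, 0 ≤ x → deriv (g i) x ≤ deriv (g j) x)
    (hd0 : ∀ j, deriv (g j) 0 = 0)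
    (hG : 0 < G) (hK : K < l) (hl : l + 1 ≤ J)
    (u v : ℝ) (hu : 0 ≤ u) (hv : 0 ≤ v)
    (z1 z2 : ℕ → ℝ) (hz1nn : ∀ i, 0 ≤ z1 i) (hz2nn : ∀ i, 0 ≤ z2 i)
    (hz1a : ∀ i ∈ Finset.Icc 1 l, z1 i = u)
    (hz1b : ∀ i ∈ Finset.Icc (l + 1) J,
      deriv (g i) (z1 i) = (∑ i ∈ Finset.Icc 1 l, deriv (g i) u) / ((l : ℝ) - K))
    (hz1G : ∑ i ∈ Finset.Icc 1 J, g i (z1 i) = G)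
    (hz2a : ∀ i ∈ Finset.Icc 1 (l + 1), z2 i = v)
    (hz2b : ∀ i ∈ Finset.Icc (l + 2) J,
      deriv (g i) (z2 i) =
        (∑ i ∈ Finset.Icc 1 (l + 1), deriv (g i) v) / ((l : ℝ) + 1 - K))
    (hz2G : ∑ i ∈ Finset.Icc 1 J, g i (z2 i) = G) :
    min u (z1 (l + 1)) ≤ v ∧ v ≤ max u (z1 (l + 1)) := by
  have dmono : ∀ j, StrictMonoOn (deriv (g j)) (Set.Ici (0:ℝ)) := fun j =>
    (hconv j).strictMonoOn_deriv (fun x _ => (hdiff j).differentiableAt)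
  have hl1 : 1 ≤ l := by omega
  set w := z1 (l+1) with hw
  have hwnn : (0:ℝ) ≤ w := hz1nn _
  have hlK : (0:ℝ) < (l:ℝ) - K := by
    have : (K:ℝ) < l := by exact_mod_cast hK
    linarith
  have hlK1 : (0:ℝ) < (l:ℝ) + 1 - K := by linarith
  set θ := (∑ i ∈ Finset.Icc 1 l, deriv (g i) u) / ((l : ℝ) - K) with hθ
  have hθw : deriv (g (l+1)) w = θ := hz1b (l+1) (Finset.mem_Icc.mpr ⟨le_refl _, hl⟩)
  have hsumθ : ∑ i ∈ Finset.Icc 1 l, deriv (g i) u = θ * ((l:ℝ) - K) := by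
    rw [hθ, div_mul_cancel₀ _ hlK.ne']
  set θ' := (∑ i ∈ Finset.Icc 1 (l+1), deriv (g i) v) / ((l : ℝ) + 1 - K) with hθ'
  have hne : (Finset.Icc 1 l).Nonempty := ⟨1, Finset.mem_Icc.mpr ⟨le_refl _, hl1⟩⟩
  have hmem1 : (1:ℕ) ∈ Finset.Icc 1 l := Finset.mem_Icc.mpr ⟨le_refl _, hl1⟩
  have hsplit : ∑ i ∈ Finset.Icc 1 (l+1), deriv (g i) v
      = ∑ i ∈ Finset.Icc 1 l, deriv (g i) v + deriv (g (l+1)) v :=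
    Finset.sum_Icc_succ_top (by omega) _
  constructor
  · by_contra h
    push_neg at h
    have hvu : v < u := lt_of_lt_of_le h (min_le_left _ _)
    have hvw : v < w := lt_of_lt_of_le h (min_le_right _ _)
    have hθ'θ : θ' < θ := by
      have h1 : ∀ i ∈ Finset.Icc 1 l, deriv (g i) v < deriv (g i) u :=
        fun i _ => dmono i hv hu hvu
      have h2 : deriv (g (l+1)) v < θ := by
        rw [← hθw]; exact dmono _ hv hwnn hvw
      have h3 : ∑ i ∈ Finset.Icc 1 (l+1), deriv (g i) v < θ * ((l:ℝ) + 1 - K) := by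
        rw [hsplit]
        have := Finset.sum_lt_sum_of_nonempty hne h1
        rw [hsumθ] at this
        nlinarith
      rw [hθ', div_lt_iff₀ hlK1]
      exact h3
    have hlt : ∑ i ∈ Finset.Icc 1 J, g i (z2 i) < ∑ i ∈ Finset.Icc 1 J, g i (z1 i) := by
      apply Finset.sum_lt_sum
      · intro i hi
        rw [Finset.mem_Icc] at hi
        rcases lt_or_ge i (l+1) with h1 | h1
        · rcases lt_or_ge i (l+1+1) with h2 | h2
          · -- i ≤ l
            have hil : i ∈ Finset.Icc 1 l := Finset.mem_Icc.mpr ⟨hi.1, by omega⟩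
            rw [hz2a i (Finset.mem_Icc.mpr ⟨hi.1, by omega⟩), hz1a i hil]
            exact (hmono i hv hu hvu).le
          · omega
        · rcases eq_or_lt_of_le h1 with h2 | h2
          · rw [← h2, hz2a (l+1) (Finset.mem_Icc.mpr ⟨by omega, le_refl _⟩)]
            exact (hmono _ hv hwnn hvw).le
          · -- tail
            have h3 : deriv (g i) (z2 i) = θ' := hz2b i (Finset.mem_Icc.mpr ⟨by omega, hi.2⟩)
            have h4 : deriv (g i) (z1 i) = θ := hz1b i (Finset.mem_Icc.mpr ⟨by omega, hi.2⟩)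
            have h5 : z2 i < z1 i := by
              by_contra h6
              push_neg at h6
              rcases eq_or_lt_of_le h6 with h7 | h7
              · rw [h7] at h4; rw [h4] at h3; linarith [hθ'θ, h3]
              · have := dmono i (hz1nn i) (hz2nn i) h7
                rw [h3, h4] at this; linarith
            exact (hmono i (hz2nn i) (hz1nn i) h5).le
      · refine ⟨1, Finset.mem_Icc.mpr ⟨le_refl _, by omega⟩, ?_⟩
        rw [hz2a 1 (Finset.mem_Icc.mpr ⟨le_refl _, by omega⟩), hz1a 1 hmem1]
        exact hmono 1 hv hu hvu
    rw [hz1G, hz2G] at hlt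
    exact lt_irrefl _ hlt
  · by_contra h
    push_neg at h
    have hvu : u < v := lt_of_le_of_lt (le_max_left _ _) h
    have hvw : w < v := lt_of_le_of_lt (le_max_right _ _) h
    have hθ'θ : θ < θ' := by
      have h1 : ∀ i ∈ Finset.Icc 1 l, deriv (g i) u < deriv (g i) v :=
        fun i _ => dmono i hu hv hvu
      have h2 : θ < deriv (g (l+1)) v := by
        rw [← hθw]; exact dmono _ hwnn hv hvw
      have h3 : θ * ((l:ℝ) + 1 - K) < ∑ i ∈ Finset.Icc 1 (l+1), deriv (g i) v := by
        rw [hsplit]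
        have := Finset.sum_lt_sum_of_nonempty hne h1
        rw [hsumθ] at this
        nlinarith
      rw [hθ', lt_div_iff₀ hlK1]
      exact h3
    have hlt : ∑ i ∈ Finset.Icc 1 J, g i (z1 i) < ∑ i ∈ Finset.Icc 1 J, g i (z2 i) := by
      apply Finset.sum_lt_sum
      · intro i hi
        rw [Finset.mem_Icc] at hi
        rcases lt_or_ge i (l+1) with h1 | h1
        · have hil : i ∈ Finset.Icc 1 l := Finset.mem_Icc.mpr ⟨hi.1, by omega⟩
          rw [hz2a i (Finset.mem_Icc.mpr ⟨hi.1, by omega⟩), hz1a i hil]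
          exact (hmono i hu hv hvu).le
        · rcases eq_or_lt_of_le h1 with h2 | h2
          · rw [← h2, hz2a (l+1) (Finset.mem_Icc.mpr ⟨by omega, le_refl _⟩)]
            exact (hmono _ hwnn hv hvw).le
          · have h3 : deriv (g i) (z2 i) = θ' := hz2b i (Finset.mem_Icc.mpr ⟨by omega, hi.2⟩)
            have h4 : deriv (g i) (z1 i) = θ := hz1b i (Finset.mem_Icc.mpr ⟨by omega, hi.2⟩)
            have h5 : z1 i < z2 i := by
              by_contra h6
              push_neg at h6
              rcases eq_or_lt_of_le h6 with h7 | h7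
              · rw [h7] at h3; rw [h3] at h4; linarith [hθ'θ, h4]
              · have := dmono i (hz2nn i) (hz1nn i) h7
                rw [h3, h4] at this; linarith
            exact (hmono i (hz1nn i) (hz2nn i) h5).le
      · refine ⟨1, Finset.mem_Icc.mpr ⟨le_refl _, by omega⟩, ?_⟩
        rw [hz2a 1 (Finset.mem_Icc.mpr ⟨le_refl _, by omega⟩), hz1a 1 hmem1]
        exact hmono 1 hu hv hvu
    rw [hz1G, hz2G] at hlt
    exact lt_irrefl _ hlt
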